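/- In the stratification used in Larman's proof, no facet can be active in three strata V_i, V_{i+1}, V_{i+2}: abstractly, if F is a set of vertices of a connected graph containing vertices at distances δ_{i−1}+1 ≤ a and c ≥ δ_{i+1}+1 from a base vertex u, and F induces a connected subgraph, and δ_{i+1} was chosen as the maximum distance of any vertex sharing a facet with a vertex at distance δ_i + 1, then F contains a vertex at distance δ_i+1 from u, contradicting maximality. Hence each facet is active in at most two consecutive strata, and Σ_{i=1}^{k} n_i ≤ 2n where n_i counts facets active in stratum V_i and n is the total number of facets. -/
import Mathlib


open Finset

lemma adj_dist_le {V : Type*} (G : SimpleGraph V) (hG : G.Connected) (u a b : V)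
    (hab : G.Adj a b) : G.dist u b ≤ G.dist u a + 1 :=
by
  have htri := hG.dist_triangle (u := u) (v := a) (w := b)
  have hab1 : G.dist a b ≤ 1 := SimpleGraph.dist_le hab.toWalk
  omega

lemma walk_ivt {V : Type*} (G : SimpleGraph V) (hG : G.Connected) (u : V) (s : Set V)
    {x y : s} (p : (G.induce s).Walk x y) (m : ℕ)
    (h1 : G.dist u x ≤ m) (h2 : m ≤ G.dist u y) :
    ∃ z ∈ s, G.dist u z = m := by
  induction p with
  | nil => exact ⟨_, Subtype.coe_prop _, le_antisymm h1 h2⟩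
  | @cons x c y h q ih =>
    have hadj : G.Adj x.val c.val := h
    by_cases hc : G.dist u c ≤ m
    · exact ih hc h2
    · have hb := adj_dist_le G hG u x c hadj
      exact ⟨x, x.2, by omega⟩

lemma ivt {V : Type*} (G : SimpleGraph V) (hG : G.Connected) (u : V) (s : Set V)
    (hconn : (SimpleGraph.induce s G).Connected) {a b : V} (ha : a ∈ s) (hb : b ∈ s)
    (m : ℕ) (h1 : G.dist u a ≤ m) (h2 : m ≤ G.dist u b) :
    ∃ z ∈ s, G.dist u z = m := by
  obtain ⟨p⟩ := hconn ⟨a, ha⟩ ⟨b, hb⟩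
  exact walk_ivt G hG u s p m h1 h2


/-- Larman's stratification: vertices of the polytope are stratified by distance to
a base vertex `u` into strata `V_i = {v : δ_{i−1} < d(u,v) ≤ δ_i}` (with `δ_0 = −1`),
where `δ_{i+1}` is the maximal distance of any vertex sharing a facet with a vertex at
distance `δ_i + 1`.  Since each facet induces a connected subgraph, no facet is active
in three strata: each facet is active in at most two consecutive strata, and hence
`Σ_{i=1}^{k} n_i ≤ 2n`, where `n_i` is the number of facets active in stratum `V_i`
and `n` is the total number of facets. -/
theorem stmt_11 {V ι : Type*} [Fintype ι] (G : SimpleGraph V) (hG : G.Connected)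
    (u : V) (k n : ℕ) (δ : ℕ → ℤ) (Fac : ι → Set V)
    (hn : Fintype.card ι = n)
    (hδ0 : δ 0 = -1)
    (hδmono : ∀ i < k, δ i < δ (i + 1))
    (hFconn : ∀ f : ι, (SimpleGraph.induce (Fac f) G).Connected)
    (hmax : ∀ i < k, ∀ f : ι, (∃ w ∈ Fac f, (G.dist u w : ℤ) = δ i + 1) →
      ∀ v ∈ Fac f, (G.dist u v : ℤ) ≤ δ (i + 1)) :
    (∀ f : ι, ∃ j : ℕ,
      {i : ℕ | 1 ≤ i ∧ i ≤ k ∧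
        ∃ v ∈ Fac f, δ (i - 1) < (G.dist u v : ℤ) ∧ (G.dist u v : ℤ) ≤ δ i}
        ⊆ {j, j + 1}) ∧
    ∑ i ∈ Icc 1 k,
        {f : ι | ∃ v ∈ Fac f, δ (i - 1) < (G.dist u v : ℤ) ∧ (G.dist u v : ℤ) ≤ δ i}.ncard
      ≤ 2 * n := by
  classical
  -- monotonicity of δ on [0, k]
  have hmono : ∀ i j : ℕ, i ≤ j → j ≤ k → δ i ≤ δ j := by
    intro i j hij hjk
    induction j with
    | zero =>
      have : i = 0 := by omega
      simp [this]
    | succ j ih =>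
      rcases Nat.eq_or_lt_of_le hij with h | h
      · exact h ▸ le_rfl
      · exact (ih (by omega) (by omega)).trans (le_of_lt (hδmono j (by omega)))
  -- key: the active-strata set is contained in {j, j+1}
  have key : ∀ f : ι, ∃ j : ℕ,
      {i : ℕ | 1 ≤ i ∧ i ≤ k ∧
        ∃ v ∈ Fac f, δ (i - 1) < (G.dist u v : ℤ) ∧ (G.dist u v : ℤ) ≤ δ i}
        ⊆ {j, j + 1} := by
    intro f
    set S : Set ℕ := {i : ℕ | 1 ≤ i ∧ i ≤ k ∧
        ∃ v ∈ Fac f, δ (i - 1) < (G.dist u v : ℤ) ∧ (G.dist u v : ℤ) ≤ δ i} with hS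
    by_cases hne : S.Nonempty
    · set j := sInf S with hj
      have hjS : j ∈ S := Nat.sInf_mem hne
      refine ⟨j, fun i hi => ?_⟩
      have hji : j ≤ i := Nat.sInf_le hi
      by_contra hcon
      simp only [Set.mem_insert_iff, Set.mem_singleton_iff] at hcon
      push_neg at hcon
      have hile : j + 2 ≤ i := by omega
      obtain ⟨hj1, hjk, v1, hv1, hd1l, hd1u⟩ := hjS
      obtain ⟨hi1, hik, v2, hv2, hd2l, hd2u⟩ := hi
      -- δ j ≥ 0
      have hδj0 : (0:ℤ) ≤ δ j := by
        have := hmono 0 j (by omega) (by omega)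
        have h01 : δ 0 < δ 1 := hδmono 0 (by omega)
        have := hmono 1 j hj1 (by omega)
        omega
      set m : ℕ := (δ j + 1).toNat with hm
      have hmz : (m : ℤ) = δ j + 1 := Int.toNat_of_nonneg (by omega)
      have h1 : G.dist u v1 ≤ m := by
        have : (G.dist u v1 : ℤ) ≤ (m : ℤ) := by omega
        exact_mod_cast this
      have h2 : m ≤ G.dist u v2 := by
        have hδstep : δ j < δ (j + 1) := hδmono j (by omega)
        have hδchain : δ (j + 1) ≤ δ (i - 1) := hmono (j+1) (i-1) (by omega) (by omega)
        have hδi1 : δ (i - 1) < (G.dist u v2 : ℤ) := hd2l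
        have : (m : ℤ) ≤ (G.dist u v2 : ℤ) := by omega
        exact_mod_cast this
      obtain ⟨z, hz, hzd⟩ := ivt G hG u (Fac f) (hFconn f) hv1 hv2 m h1 h2
      have hzδ : (G.dist u z : ℤ) = δ j + 1 := by rw [hzd]; exact hmz
      have := hmax j (by omega) f ⟨z, hz, hzδ⟩ v2 hv2
      have hδchain : δ (j + 1) ≤ δ (i - 1) := hmono (j+1) (i-1) (by omega) (by omega)
      omega
    · exact ⟨0, fun i hi => absurd ⟨i, hi⟩ hne⟩
  refine ⟨key, ?_⟩
  -- double counting
  have hcard : ∀ i, {f : ι | ∃ v ∈ Fac f, δ (i - 1) < (G.dist u v : ℤ) ∧ (G.dist u v : ℤ) ≤ δ i}.ncard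
      = (Finset.univ.filter (fun f : ι => ∃ v ∈ Fac f, δ (i - 1) < (G.dist u v : ℤ) ∧ (G.dist u v : ℤ) ≤ δ i)).card := by
    intro i
    rw [Set.ncard_eq_toFinset_card']
    congr 1
    ext f
    simp
  calc ∑ i ∈ Icc 1 k,
        {f : ι | ∃ v ∈ Fac f, δ (i - 1) < (G.dist u v : ℤ) ∧ (G.dist u v : ℤ) ≤ δ i}.ncard
      = ∑ i ∈ Icc 1 k, ∑ f : ι,
          (if ∃ v ∈ Fac f, δ (i - 1) < (G.dist u v : ℤ) ∧ (G.dist u v : ℤ) ≤ δ i then 1 else 0) := by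
        refine Finset.sum_congr rfl fun i _ => ?_
        rw [hcard i, Finset.card_filter]
    _ = ∑ f : ι, ∑ i ∈ Icc 1 k,
          (if ∃ v ∈ Fac f, δ (i - 1) < (G.dist u v : ℤ) ∧ (G.dist u v : ℤ) ≤ δ i then 1 else 0) :=
        Finset.sum_comm
    _ ≤ ∑ _f : ι, 2 := by
        refine Finset.sum_le_sum fun f _ => ?_
        obtain ⟨j, hj⟩ := key f
        rw [← Finset.card_filter]
        calc ((Icc 1 k).filter (fun i => ∃ v ∈ Fac f, δ (i - 1) < (G.dist u v : ℤ) ∧ (G.dist u v : ℤ) ≤ δ i)).card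
            ≤ ({j, j+1} : Finset ℕ).card := by
              apply Finset.card_le_card
              intro i hi
              simp only [Finset.mem_filter, Finset.mem_Icc] at hi
              have : i ∈ ({j, j+1} : Set ℕ) := hj ⟨hi.1.1, hi.1.2, hi.2⟩
              simpa using this
          _ ≤ 2 := Finset.card_insert_le _ _ |>.trans (by simp)
    _ = 2 * n := by simp [hn, mul_comm]
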